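/- arXiv:2008.08192 — 2 statements merged into one kernel-verified Lean document; each statement's English description precedes it below -/
import Mathlib

section
/- The kernel of the natural epimorphism χ(G) → G × G (sending g ↦ (g,1) and g^φ ↦ (1,g)) is the subgroup D(G) = [G, G^φ] generated by all commutators [g, h^φ] with g, h ∈ G. -/
open scoped commutatorElement in
def chiRels (G : Type*) [Group G] : Subgroup (Monoid.Coprod G G) :=
  Subgroup.normalClosure {x | ∃ g : G, x = ⁅(Monoid.Coprod.inl g : Monoid.Coprod G G), Monoid.Coprod.inr g⁆}

instance (G : Type*) [Group G] : (chiRels G).Normal :=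
  Subgroup.normalClosure_normal

def chi (G : Type*) [Group G] := Monoid.Coprod G G ⧸ chiRels G

instance (G : Type*) [Group G] : Group (chi G) :=
  QuotientGroup.Quotient.group _

/-- The canonical map `G →* χ(G)`. -/
def chiL (G : Type*) [Group G] : G →* chi G :=
  (QuotientGroup.mk' (chiRels G)).comp Monoid.Coprod.inl

/-- The canonical map `G^φ →* χ(G)`, `g ↦ g^φ`. -/
def chiR (G : Type*) [Group G] : G →* chi G :=
  (QuotientGroup.mk' (chiRels G)).comp Monoid.Coprod.inr

/-- `D(G) = [G, G^φ] ≤ χ(G)`. -/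
def chiD (G : Type*) [Group G] : Subgroup (chi G) :=
  ⁅(chiL G).range, (chiR G).range⁆

open scoped commutatorElement in
/-- If two subgroups generate the whole group, their commutator subgroup is normal. -/
theorem commutator_normal_of_sup_eq_top {H : Type*} [Group H] {A B : Subgroup H}
    (hsup : A ⊔ B = ⊤) : ⁅A, B⁆.Normal := by
  have key : ∀ g : H, (g ∈ A ∨ g ∈ B) → ∀ n ∈ ⁅A, B⁆, g * n * g⁻¹ ∈ ⁅A, B⁆ := by
    intro g hg n hn
    rw [Subgroup.commutator_def] at hn
    induction hn using Subgroup.closure_induction with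
    | mem x hx =>
      obtain ⟨a, ha, b, hb, rfl⟩ := hx
      rcases hg with hg | hg
      · have h1 : ⁅g * a, b⁆ ∈ ⁅A, B⁆ :=
          Subgroup.commutator_mem_commutator (mul_mem hg ha) hb
        have h2 : ⁅g, b⁆ ∈ ⁅A, B⁆ := Subgroup.commutator_mem_commutator hg hb
        have : g * ⁅a, b⁆ * g⁻¹ = ⁅g * a, b⁆ * ⁅g, b⁆⁻¹ := by
          simp only [commutatorElement_def]; group
        rw [this]
        exact mul_mem h1 (inv_mem h2)
      · have h1 : ⁅a, g * b⁆ ∈ ⁅A, B⁆ :=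
          Subgroup.commutator_mem_commutator ha (mul_mem hg hb)
        have h2 : ⁅a, g⁆ ∈ ⁅A, B⁆ := Subgroup.commutator_mem_commutator ha hg
        have : g * ⁅a, b⁆ * g⁻¹ = ⁅a, g⁆⁻¹ * ⁅a, g * b⁆ := by
          simp only [commutatorElement_def]; group
        rw [this]
        exact mul_mem (inv_mem h2) h1
    | one => simpa using Subgroup.one_mem _
    | mul x y _ _ hx hy =>
      have : g * (x * y) * g⁻¹ = (g * x * g⁻¹) * (g * y * g⁻¹) := by group
      rw [this]; exact mul_mem hx hy
    | inv x _ hx =>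
      have : g * x⁻¹ * g⁻¹ = (g * x * g⁻¹)⁻¹ := by group
      rw [this]; exact inv_mem hx
  have hNle : A ⊔ B ≤ Subgroup.normalizer ((⁅A, B⁆ : Subgroup H) : Set H) := by
    apply sup_le
    · intro g hg
      rw [Subgroup.mem_normalizer_iff]
      intro n
      constructor
      · intro hn; exact key g (Or.inl hg) n hn
      · intro hn
        have := key g⁻¹ (Or.inl (inv_mem hg)) _ hn
        simpa [mul_assoc] using this
    · intro g hg
      rw [Subgroup.mem_normalizer_iff]
      intro n
      constructor
      · intro hn; exact key g (Or.inr hg) n hn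
      · intro hn
        have := key g⁻¹ (Or.inr (inv_mem hg)) _ hn
        simpa [mul_assoc] using this
  rw [hsup] at hNle
  rw [← Subgroup.normalizer_eq_top_iff]
  exact top_le_iff.mp hNle

theorem chi_ranges_sup_eq_top (G : Type*) [Group G] :
    (chiL G).range ⊔ (chiR G).range = ⊤ := by
  have hsur : Function.Surjective (QuotientGroup.mk' (chiRels G)) :=
    QuotientGroup.mk'_surjective _
  have h1 : (chiL G).range = Subgroup.map (QuotientGroup.mk' (chiRels G))
      (Monoid.Coprod.inl : G →* Monoid.Coprod G G).range := by
    exact (MonoidHom.map_range _ _).symm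
  have h2 : (chiR G).range = Subgroup.map (QuotientGroup.mk' (chiRels G))
      (Monoid.Coprod.inr : G →* Monoid.Coprod G G).range := by
    exact (MonoidHom.map_range _ _).symm
  have := Subgroup.map_sup (Monoid.Coprod.inl : G →* Monoid.Coprod G G).range
    (Monoid.Coprod.inr : G →* Monoid.Coprod G G).range (QuotientGroup.mk' (chiRels G))
  rw [Monoid.Coprod.range_inl_sup_range_inr, Subgroup.map_top_of_surjective _ hsur] at this
  rw [h1, h2]
  exact this.symm

instance chiD_normal (G : Type*) [Group G] : (chiD G).Normal :=
  commutator_normal_of_sup_eq_top (chi_ranges_sup_eq_top G)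

/-- The kernel of the natural epimorphism χ(G) → G × G
(g ↦ (g,1), g^φ ↦ (1,g)) is D(G) = [G, G^φ]. -/
theorem stmt_4 {G : Type*} [Group G] (f : chi G →* G × G)
    (hfL : ∀ g : G, f (chiL G g) = (g, 1))
    (hfR : ∀ g : G, f (chiR G g) = (1, g)) :
    f.ker = chiD G := by
  apply le_antisymm
  · -- ker f ≤ chiD
    set q : chi G →* chi G ⧸ chiD G := QuotientGroup.mk' (chiD G) with hq
    have hcomm : ∀ a b : G, Commute (q (chiL G a)) (q (chiR G b)) := by
      intro a b
      rw [← commutatorElement_eq_one_iff_commute, ← map_commutatorElement]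
      rw [hq, QuotientGroup.mk'_apply, QuotientGroup.eq_one_iff]
      exact Subgroup.commutator_mem_commutator ⟨a, rfl⟩ ⟨b, rfl⟩
    set s : G × G →* chi G ⧸ chiD G :=
      MonoidHom.noncommCoprod (q.comp (chiL G)) (q.comp (chiR G)) hcomm with hs
    have hkey : s.comp f = q := by
      have hsurj : Function.Surjective (QuotientGroup.mk' (chiRels G)) :=
        QuotientGroup.mk'_surjective _
      have : (s.comp f).comp (QuotientGroup.mk' (chiRels G)) =
          q.comp (QuotientGroup.mk' (chiRels G)) := by
        apply Monoid.Coprod.hom_ext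
        · ext g
          show s (f (chiL G g)) = q (chiL G g)
          rw [hfL g, hs]
          simp [MonoidHom.noncommCoprod]
        · ext g
          show s (f (chiR G g)) = q (chiR G g)
          rw [hfR g, hs]
          simp [MonoidHom.noncommCoprod]
      ext x
      obtain ⟨y, rfl⟩ := hsurj x
      exact congrFun (congrArg DFunLike.coe this) y
    intro x hx
    have hx1 : f x = 1 := hx
    have : q x = 1 := by
      rw [← hkey]
      simp [MonoidHom.comp_apply, hx1]
    rwa [hq, QuotientGroup.mk'_apply, QuotientGroup.eq_one_iff] at this
  · -- chiD ≤ ker f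
    rw [chiD, Subgroup.commutator_le]
    rintro x ⟨a, rfl⟩ y ⟨b, rfl⟩
    rw [MonoidHom.mem_ker, map_commutatorElement, hfL, hfR]
    simp [commutatorElement_def, Prod.ext_iff]
end

section
/- The kernel of the natural epimorphism χ(G) → G (sending both g and g^φ to g) is the subgroup L(G) generated by all elements g⁻¹g^φ with g ∈ G, and L(G) and D(G) = [G,G^φ] commute elementwise. -/
/-- L(G) = ⟨g⁻¹ g^φ : g ∈ G⟩ ≤ χ(G). -/
def chiLsub (G : Type*) [Group G] : Subgroup (chi G) :=
  Subgroup.closure {x | ∃ g : G, x = (chiL G g)⁻¹ * chiR G g}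

section Aux

open scoped commutatorElement

variable {G : Type*} [Group G]

/-- The defining relations hold in `χ(G)`. -/
lemma chi_comm (g : G) : Commute (chiL G g) (chiR G g) := by
  rw [← commutatorElement_eq_one_iff_commute]
  have h : (⁅(Monoid.Coprod.inl g : Monoid.Coprod G G), Monoid.Coprod.inr g⁆) ∈ chiRels G :=
    Subgroup.subset_normalClosure ⟨g, rfl⟩
  have h2 := (QuotientGroup.eq_one_iff
      (⁅(Monoid.Coprod.inl g : Monoid.Coprod G G), Monoid.Coprod.inr g⁆)).mpr h
  have h3 : (QuotientGroup.mk' (chiRels G))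
      ⁅(Monoid.Coprod.inl g : Monoid.Coprod G G), Monoid.Coprod.inr g⁆ = 1 := h2
  rw [map_commutatorElement] at h3
  exact h3

/-- Induction principle for `χ(G)`. -/
lemma chi_induction {C : chi G → Prop} (x : chi G)
    (hl : ∀ g, C (chiL G g)) (hr : ∀ g, C (chiR G g))
    (hmul : ∀ x y, C x → C y → C (x * y)) : C x := by
  obtain ⟨w, rfl⟩ := QuotientGroup.mk'_surjective (chiRels G) x
  induction w using Monoid.Coprod.induction_on with
  | inl g => exact hl g
  | inr g => exact hr g
  | mul p q hp hq => rw [map_mul]; exact hmul _ _ hp hq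

/-- An abstract computation: if `A*B` commutes with `A'*B'` and `A` with `A'`,
`B` with `B'`, then `B * A' = A' * (A⁻¹ * B' * A * B'⁻¹ * B)`. -/
private lemma key_comm {H : Type*} [Group H] {A B A' B' : H}
    (h1 : (A * B) * (A' * B') = (A' * B') * (A * B))
    (h2 : A * A' = A' * A) (h3 : B * B' = B' * B) :
    B * A' = A' * (A⁻¹ * B' * A * B'⁻¹ * B) := by
  have e1 : A * (B * A') * B' = (A' * B') * (A * B) := by rw [← h1]; group
  have e2 : A * (A' * (A⁻¹ * B' * A * B'⁻¹ * B)) * B' = (A' * B') * (A * B) := by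
    calc A * (A' * (A⁻¹ * B' * A * B'⁻¹ * B)) * B'
        = (A * A') * (A⁻¹ * B' * A * B'⁻¹ * (B * B')) := by group
      _ = (A' * A) * (A⁻¹ * B' * A * B'⁻¹ * (B' * B)) := by rw [h2, h3]
      _ = (A' * B') * (A * B) := by group
  exact mul_left_cancel (mul_right_cancel (e1.trans e2.symm))

/-- `u a y = [a, (y^φ)⁻¹]`. -/
private def uu (G : Type*) [Group G] (a y : G) : chi G :=
  (chiL G a)⁻¹ * chiR G y * chiL G a * (chiR G y)⁻¹

/-- The relation (E): `y · a^φ = a^φ · (u a y · y)`. -/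
private lemma chi_E (a z : G) :
    chiL G z * chiR G a = chiR G a * (uu G a z * chiL G z) := by
  have h1 : (chiL G a * chiL G z) * (chiR G a * chiR G z)
      = (chiR G a * chiR G z) * (chiL G a * chiL G z) := by
    have := (chi_comm (a * z) : _).eq
    rwa [map_mul, map_mul] at this
  have := key_comm h1 (chi_comm a).eq (chi_comm z).eq
  rw [this]; unfold uu; group

private lemma chi_psi (a z : G) :
    uu G a z * chiL G z = (chiR G a)⁻¹ * (chiL G z * chiR G a) := by
  rw [chi_E]; group

/-- `u a` is a cocycle for the right copy. -/
private lemma uu_mul_r (a x y : G) :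
    uu G a (x * y) = uu G a x * (chiR G x * uu G a y * (chiR G x)⁻¹) := by
  unfold uu
  rw [map_mul]
  group

/-- `u a` is a cocycle for the left copy as well. -/
private lemma uu_mul_l (a x y : G) :
    uu G a (x * y) = uu G a x * (chiL G x * uu G a y * (chiL G x)⁻¹) := by
  have e : uu G a (x * y) * chiL G (x * y) = (uu G a x * chiL G x) * (uu G a y * chiL G y) := by
    rw [chi_psi, chi_psi, chi_psi, map_mul]
    group
  have e2 : uu G a (x * y)
      = ((uu G a x * chiL G x) * (uu G a y * chiL G y)) * (chiL G (x * y))⁻¹ := by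
    rw [← e]; group
  rw [e2, map_mul]; group

/-- The crucial commutation: `g⁻¹ g^φ` commutes with each `[a, b^φ]`. -/
private lemma chi_key (g a b : G) :
    Commute ((chiL G g)⁻¹ * chiR G g) ⁅chiL G a, chiR G b⁆ := by
  have h9 : chiR G g * uu G a⁻¹ b * (chiR G g)⁻¹ = chiL G g * uu G a⁻¹ b * (chiL G g)⁻¹ :=
    mul_left_cancel ((uu_mul_r a⁻¹ g b).symm.trans (uu_mul_l a⁻¹ g b))
  have hcomm : Commute ((chiL G g)⁻¹ * chiR G g) (uu G a⁻¹ b) := by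
    show (chiL G g)⁻¹ * chiR G g * uu G a⁻¹ b = uu G a⁻¹ b * ((chiL G g)⁻¹ * chiR G g)
    calc (chiL G g)⁻¹ * chiR G g * uu G a⁻¹ b
        = (chiL G g)⁻¹ * (chiR G g * uu G a⁻¹ b * (chiR G g)⁻¹) * chiR G g := by group
      _ = (chiL G g)⁻¹ * (chiL G g * uu G a⁻¹ b * (chiL G g)⁻¹) * chiR G g := by rw [h9]
      _ = uu G a⁻¹ b * ((chiL G g)⁻¹ * chiR G g) := by group
  have hco : ⁅chiL G a, chiR G b⁆ = uu G a⁻¹ b := by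
    unfold uu
    rw [map_inv, commutatorElement_def]
    group
  rw [hco]
  exact hcomm

/-- Conjugation by `chiL`-elements preserves `L(G)`. -/
private lemma chi_conjL (h : G) {x : chi G} (hx : x ∈ chiLsub G) :
    (chiL G h)⁻¹ * x * chiL G h ∈ chiLsub G := by
  induction hx using Subgroup.closure_induction with
  | mem y hy =>
    obtain ⟨g, rfl⟩ := hy
    have e : (chiL G h)⁻¹ * ((chiL G g)⁻¹ * chiR G g) * chiL G h
        = ((chiL G (g * h))⁻¹ * chiR G (g * h)) * ((chiL G h)⁻¹ * chiR G h)⁻¹ := by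
      rw [map_mul, map_mul]; group
    rw [e]
    exact mul_mem (Subgroup.subset_closure ⟨g * h, rfl⟩)
      (inv_mem (Subgroup.subset_closure ⟨h, rfl⟩))
  | one => simpa using one_mem (chiLsub G)
  | mul y z hy hz hy' hz' =>
    have e : (chiL G h)⁻¹ * (y * z) * chiL G h
        = ((chiL G h)⁻¹ * y * chiL G h) * ((chiL G h)⁻¹ * z * chiL G h) := by group
    rw [e]; exact mul_mem hy' hz'
  | inv y hy hy' =>
    have e : (chiL G h)⁻¹ * y⁻¹ * chiL G h = ((chiL G h)⁻¹ * y * chiL G h)⁻¹ := by group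
    rw [e]; exact inv_mem hy'

end Aux

/-- The kernel of the natural epimorphism χ(G) → G (g ↦ g, g^φ ↦ g) is
L(G) = ⟨g⁻¹ g^φ : g ∈ G⟩, and L(G) and D(G) commute elementwise. -/
theorem stmt_5 {G : Type*} [Group G] (f : chi G →* G)
    (hfL : ∀ g : G, f (chiL G g) = g)
    (hfR : ∀ g : G, f (chiR G g) = g) :
    f.ker = chiLsub G ∧
      ∀ a ∈ chiLsub G, ∀ b ∈ chiD G, Commute a b := by
  constructor
  · -- kernel computation
    have total : ∀ x : chi G, (chiL G (f x))⁻¹ * x ∈ chiLsub G := by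
      intro x
      induction x using chi_induction with
      | hl g => rw [hfL]; simpa using one_mem (chiLsub G)
      | hr g => rw [hfR]; exact Subgroup.subset_closure ⟨g, rfl⟩
      | hmul x y hx hy =>
        have e : (chiL G (f (x * y)))⁻¹ * (x * y)
            = ((chiL G (f y))⁻¹ * ((chiL G (f x))⁻¹ * x) * chiL G (f y))
              * ((chiL G (f y))⁻¹ * y) := by
          rw [map_mul f, map_mul]; group
        rw [e]
        exact mul_mem (chi_conjL (f y) hx) hy
    apply le_antisymm
    · intro x hx
      have hx1 : f x = 1 := hx
      have := total x
      rwa [hx1, map_one, inv_one, one_mul] at this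
    · rw [chiLsub, Subgroup.closure_le]
      rintro x ⟨g, rfl⟩
      have : f ((chiL G g)⁻¹ * chiR G g) = 1 := by
        rw [map_mul, map_inv, hfL, hfR, inv_mul_cancel]
      exact this
  · -- commutation of L(G) and D(G)
    intro a ha b hb
    have hDcent : ∀ g : G, ∀ d ∈ chiD G, Commute ((chiL G g)⁻¹ * chiR G g) d := by
      intro g d hd
      have hle : chiD G ≤ Subgroup.centralizer {(chiL G g)⁻¹ * chiR G g} := by
        rw [chiD, Subgroup.commutator_le]
        rintro _ ⟨x, rfl⟩ _ ⟨y, rfl⟩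
        rw [Subgroup.mem_centralizer_iff]
        rintro m rfl
        exact (chi_key g x y).eq
      have := hle hd
      rw [Subgroup.mem_centralizer_iff] at this
      exact this _ rfl
    have hL : chiLsub G ≤ Subgroup.centralizer {b} := by
      rw [chiLsub, Subgroup.closure_le]
      rintro x ⟨g, rfl⟩
      rw [SetLike.mem_coe, Subgroup.mem_centralizer_iff]
      intro m hm
      rw [show m = b from hm]
      exact ((hDcent g b hb).symm).eq
    have hab := Subgroup.mem_centralizer_iff.mp (hL ha) b rfl
    exact hab.symm
end
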